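/- Let k ≥ 3 and i ≥ 3. Define A_i = {(k-1)^i - α(k-2) - βk : α, β ∈ ℕ} and A'_i = {(k-1)^i - α(k-2) - βk : α, β ∈ ℕ, α + β ≤ (k-1)^{i-2}(k-2)}. Then every element of A_i lying in the interval [(k-1)^{i-2} + 2(k-1), (k-1)^i] belongs to A'_i. -/
import Mathlib


/-- Every element of `A_i = {(k-1)^i - α(k-2) - βk : α, β ∈ ℕ}` lying in the interval
`[(k-1)^{i-2} + 2(k-1), (k-1)^i]` belongs to
`A'_i = {(k-1)^i - α(k-2) - βk : α + β ≤ (k-1)^{i-2}(k-2)}`. -/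
theorem interval_mem_A' (k i : ℕ) (hk : 3 ≤ k) (hi : 3 ≤ i) (m : ℤ)
    (hA : ∃ α β : ℕ, m = ((k : ℤ) - 1) ^ i - α * ((k : ℤ) - 2) - β * k)
    (hlb : ((k : ℤ) - 1) ^ (i - 2) + 2 * ((k : ℤ) - 1) ≤ m)
    (hub : m ≤ ((k : ℤ) - 1) ^ i) :
    ∃ α β : ℕ, α + β ≤ (k - 1) ^ (i - 2) * (k - 2) ∧
      m = ((k : ℤ) - 1) ^ i - α * ((k : ℤ) - 2) - β * k := by
  obtain ⟨α, β, hm⟩ := hA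
  set q : ℕ := α / k with hq
  set r : ℕ := α % k with hr
  have hkpos : (0:ℤ) < (k:ℤ) := by exact_mod_cast (by omega : 0 < k)
  have hdiv : (α : ℤ) = (k:ℤ) * (q:ℤ) + (r:ℤ) := by
    exact_mod_cast (Nat.div_add_mod α k).symm
  have hrlt : (r : ℤ) < (k:ℤ) := by
    exact_mod_cast Nat.mod_lt α (by omega : 0 < k)
  have hc : ((k - 2 : ℕ) : ℤ) = (k:ℤ) - 2 := by
    push_cast [Nat.cast_sub (by omega : 2 ≤ k)]; ring
  have hc1 : ((k - 1 : ℕ) : ℤ) = (k:ℤ) - 1 := by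
    push_cast [Nat.cast_sub (by omega : 1 ≤ k)]; ring
  have hpow : ((k:ℤ)-1)^i = ((k:ℤ)-1)^(i-2) * ((k:ℤ)-1)^2 := by
    rw [← pow_add]; congr 1; omega
  refine ⟨r, β + q * (k - 2), ?_, ?_⟩
  · -- inequality
    have key : (k:ℤ) * ((r:ℤ) + ((β : ℤ) + (q:ℤ) * ((k:ℤ) - 2)))
        ≤ (k:ℤ) * (((k:ℤ)-1)^(i-2) * ((k:ℤ)-2)) := by
      have hd : (α : ℤ) * ((k:ℤ)-2) + (β:ℤ) * k ≤ ((k:ℤ)-1)^i - m := by linarith [hm]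
      rw [hpow] at hd
      nlinarith [hrlt, hlb, hdiv]
    have key2 := le_of_mul_le_mul_left key hkpos
    have hn : ((r + (β + q * (k - 2)) : ℕ) : ℤ)
        = (r:ℤ) + ((β : ℤ) + (q:ℤ) * ((k:ℤ) - 2)) := by
      push_cast [hc]; ring
    have hg : ((((k - 1) ^ (i - 2) * (k - 2)) : ℕ) : ℤ) = ((k:ℤ)-1)^(i-2) * ((k:ℤ)-2) := by
      push_cast [hc, hc1]; ring
    have : ((r + (β + q * (k - 2)) : ℕ) : ℤ) ≤ (((k - 1) ^ (i - 2) * (k - 2) : ℕ) : ℤ) := by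
      rw [hn, hg]; exact key2
    exact_mod_cast this
  · rw [hm]
    push_cast [hc]
    rw [hdiv]
    ring
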